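/- Suppose there exists δ > 0 such that p_i > δ for all i ≥ 1. Then there exists a real number R > 1 such that E = ∩_{n=0}^{∞} q_{F_n}^{-1}(D(0,R)) where D(0,R) is the open disk of center 0 and radius R, and moreover the preimages are nested: q_{F_{n+1}}^{-1}(D(0,R)) ⊆ q_{F_n}^{-1}(D(0,R)) for all n ≥ 0. -/
import Mathlib


/-- `rr p n = r_n = p (⌊(n+1)/2⌋ + 1)`. -/
noncomputable def rr (p : ℕ → ℝ) (n : ℕ) : ℝ := p ((n+1)/2 + 1)

/-- `qF p z n = q_{F_n}(z)`. -/
noncomputable def qF (p : ℕ → ℝ) (z : ℂ) : ℕ → ℂ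
  | 0 => (z - (1 - (p 1 : ℂ))) / (p 1 : ℂ)
  | 1 => (1 / (p 2 : ℂ)) * (qF p z 0) ^ 2 - (1 / (p 2 : ℂ) - 1)
  | (n+2) => (1 / (rr p (n+2) : ℂ)) * qF p z (n+1) * qF p z n - (1 / (rr p (n+2) : ℂ) - 1)

/-- The fibered filled Julia set `E = {z : (q_{F_n}(z))ₙ is bounded}`. -/
def Eset (p : ℕ → ℝ) : Set ℂ := {z : ℂ | ∃ C : ℝ, ∀ n : ℕ, ‖qF p z n‖ ≤ C}

noncomputable def PQ (p : ℕ → ℝ) (z : ℂ) : ℕ → ℂ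
  | 0 => qF p z 0 * qF p z 0
  | (n+1) => qF p z (n+1) * qF p z n

lemma rr_facts (p : ℕ → ℝ) (δ : ℝ) (hp : ∀ i, 1 ≤ i → 0 < p i ∧ p i ≤ 1)
    (hpδ : ∀ i, 1 ≤ i → δ < p i) (m : ℕ) :
    δ < rr p m ∧ 0 < rr p m ∧ rr p m ≤ 1 := by
  have h1 : 1 ≤ (m+1)/2 + 1 := by omega
  exact ⟨hpδ _ h1, (hp _ h1).1, (hp _ h1).2⟩

lemma PQ_eq (p : ℕ → ℝ) (z : ℂ) (hr : ∀ i, 1 ≤ i → p i ≠ 0) (m : ℕ) :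
    PQ p z m = (rr p (m+1) : ℂ) * qF p z (m+1) + (1 - (rr p (m+1) : ℂ)) := by
  match m with
  | 0 =>
    have h2 : rr p 1 = p 2 := by unfold rr; norm_num
    have hne : (p 2 : ℂ) ≠ 0 := by exact_mod_cast hr 2 (by norm_num)
    rw [PQ, h2]
    have h1 : qF p z 1 = (1 / (p 2 : ℂ)) * (qF p z 0) ^ 2 - (1 / (p 2 : ℂ) - 1) := by
      conv_lhs => rw [qF]
    rw [h1]
    field_simp
    all_goals ring
  | (n+1) =>
    have hne : (rr p (n+2) : ℂ) ≠ 0 := by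
      have h : rr p (n+2) = p ((n+3)/2 + 1) := rfl
      exact_mod_cast (h ▸ hr ((n+3)/2 + 1) (by omega))
    rw [PQ]
    have h1 : qF p z (n+2)
        = (1 / (rr p (n+2) : ℂ)) * qF p z (n+1) * qF p z n - (1 / (rr p (n+2) : ℂ) - 1) := by
      conv_lhs => rw [qF]
    rw [h1]
    field_simp
    all_goals ring

lemma aux_norm (r : ℝ) (hr0 : 0 < r) (hr1 : r ≤ 1) (u v : ℂ)
    (h : u = (r:ℂ) * v + (1 - (r:ℂ))) :
    r * ‖v‖ - (1 - r) ≤ ‖u‖ ∧ ‖u‖ ≤ r * ‖v‖ + (1 - r) := by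
  have h1 : ‖(r:ℂ)*v‖ = r*‖v‖ := by
    rw [norm_mul, Complex.norm_real, Real.norm_eq_abs, abs_of_pos hr0]
  have h2 : ‖(1:ℂ) - (r:ℂ)‖ = 1 - r := by
    rw [show (1:ℂ) - (r:ℂ) = ((1 - r : ℝ):ℂ) by push_cast; ring, Complex.norm_real,
      Real.norm_eq_abs, abs_of_nonneg (by linarith)]
  constructor
  · have := norm_sub_norm_le ((r:ℂ)*v) (-(1 - (r:ℂ)))
    rw [norm_neg, sub_neg_eq_add, h1, h2, ← h] at this
    linarith
  · calc ‖u‖ ≤ ‖(r:ℂ)*v‖ + ‖(1:ℂ)-(r:ℂ)‖ := h ▸ norm_add_le _ _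
    _ = r * ‖v‖ + (1 - r) := by rw [h1, h2]

lemma normPQ (p : ℕ → ℝ) (z : ℂ) (δ : ℝ) (hp : ∀ i, 1 ≤ i → 0 < p i ∧ p i ≤ 1)
    (hpδ : ∀ i, 1 ≤ i → δ < p i) (m : ℕ) :
    rr p (m+1) * ‖qF p z (m+1)‖ - (1 - rr p (m+1)) ≤ ‖PQ p z m‖ ∧
      ‖PQ p z m‖ ≤ rr p (m+1) * ‖qF p z (m+1)‖ + (1 - rr p (m+1)) :=
  aux_norm _ (rr_facts p δ hp hpδ (m+1)).2.1 (rr_facts p δ hp hpδ (m+1)).2.2 _ _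
    (PQ_eq p z (fun i hi => ne_of_gt (hp i hi).1) m)

lemma PQ_norm_zero (p : ℕ → ℝ) (z : ℂ) : ‖PQ p z 0‖ = ‖qF p z 0‖ * ‖qF p z 0‖ := by
  rw [show PQ p z 0 = qF p z 0 * qF p z 0 from rfl, norm_mul]

lemma PQ_norm_succ (p : ℕ → ℝ) (z : ℂ) (n : ℕ) :
    ‖PQ p z (n+1)‖ = ‖qF p z (n+1)‖ * ‖qF p z n‖ := by
  rw [show PQ p z (n+1) = qF p z (n+1) * qF p z n from rfl, norm_mul]

lemma fwd (p : ℕ → ℝ) (z : ℂ) (δ : ℝ) (hp : ∀ i, 1 ≤ i → 0 < p i ∧ p i ≤ 1)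
    (hpδ : ∀ i, 1 ≤ i → δ < p i) (m : ℕ) (h1 : 1 ≤ ‖PQ p z m‖) :
    ‖PQ p z m‖ ≤ ‖qF p z (m+1)‖ := by
  obtain ⟨hA, hB⟩ := normPQ p z δ hp hpδ m
  obtain ⟨-, hr0, hr1⟩ := rr_facts p δ hp hpδ (m+1)
  nlinarith [norm_nonneg (qF p z (m+1)), mul_nonneg (sub_nonneg.2 hr1) (sub_nonneg.2 h1)]

lemma claimM (p : ℕ → ℝ) (z : ℂ) (δ : ℝ) (hδ : 0 < δ)
    (hp : ∀ i, 1 ≤ i → 0 < p i ∧ p i ≤ 1) (hpδ : ∀ i, 1 ≤ i → δ < p i) :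
    ∀ m : ℕ, 2/δ + 1 ≤ ‖qF p z (m+1)‖ →
      δ * ‖qF p z (m+1)‖ - 1 ≤ ‖qF p z (m+1)‖ * ‖qF p z m‖ := by
  have hδ1 : δ < 1 := lt_of_lt_of_le (hpδ 1 le_rfl) (hp 1 le_rfl).2
  have h2δ : 0 < 2/δ := by positivity
  have hkey : δ * (2/δ + 1) = 2 + δ := by field_simp
  intro m
  induction m using Nat.strong_induction_on with
  | _ m ih =>
  intro hS
  by_contra hcon
  push_neg at hcon
  have ha0 : 0 < ‖qF p z (m+1)‖ := by linarith
  have hδa : 2 + δ ≤ δ * ‖qF p z (m+1)‖ := by nlinarith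
  have hb : ‖qF p z m‖ < δ := by
    have h1 : ‖qF p z (m+1)‖ * ‖qF p z m‖ < ‖qF p z (m+1)‖ * δ := by nlinarith
    exact lt_of_mul_lt_mul_left h1 ha0.le
  match m, hS, hcon, ha0, hδa, hb, ih with
  | 0, hS, hcon, ha0, hδa, hb, _ =>
    obtain ⟨hA, -⟩ := normPQ p z δ hp hpδ 0
    rw [PQ_norm_zero] at hA
    obtain ⟨hr1δ, hr10, hr11⟩ := rr_facts p δ hp hpδ 1
    nlinarith [norm_nonneg (qF p z 0), norm_nonneg (qF p z 1),
      mul_le_mul_of_nonneg_right (le_of_lt hr1δ) (norm_nonneg (qF p z 1))]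
  | 1, hS, hcon, ha0, hδa, hb, _ =>
    obtain ⟨hA, -⟩ := normPQ p z δ hp hpδ 1
    rw [PQ_norm_succ] at hA
    obtain ⟨hr2δ, hr20, hr21⟩ := rr_facts p δ hp hpδ 2
    obtain ⟨hr1δ, hr10, hr11⟩ := rr_facts p δ hp hpδ 1
    obtain ⟨-, hB0⟩ := normPQ p z δ hp hpδ 0
    rw [PQ_norm_zero] at hB0
    have hprod : ‖qF p z 2‖ * ‖qF p z 1‖ < ‖qF p z 1‖ * ‖qF p z 0‖ := by
      nlinarith [mul_le_mul_of_nonneg_right (le_of_lt hr2δ) (norm_nonneg (qF p z 2))]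
    have hb1pos : 0 < ‖qF p z 1‖ := by
      rcases eq_or_lt_of_le (norm_nonneg (qF p z 1)) with h | h
      · exfalso
        nlinarith [mul_le_mul_of_nonneg_right (le_of_lt hr2δ) (norm_nonneg (qF p z 2)),
          norm_nonneg (qF p z 0), h.symm]
      · exact h
    have hc : ‖qF p z 2‖ < ‖qF p z 0‖ := by
      have h1 : ‖qF p z 1‖ * ‖qF p z 2‖ < ‖qF p z 1‖ * ‖qF p z 0‖ := by
        rw [mul_comm] at hprod; linarith [hprod]
      exact lt_of_mul_lt_mul_left h1 hb1pos.le
    nlinarith [norm_nonneg (qF p z 0),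
      mul_lt_mul_of_pos_left (show ‖qF p z 1‖ < 1 by linarith) hr10]
  | (k+2), hS, hcon, ha0, hδa, hb, ih =>
    obtain ⟨hA, -⟩ := normPQ p z δ hp hpδ (k+2)
    rw [PQ_norm_succ] at hA
    obtain ⟨hrδ, hr0, hr1⟩ := rr_facts p δ hp hpδ (k+3)
    obtain ⟨hr'δ, hr'0, hr'1⟩ := rr_facts p δ hp hpδ (k+2)
    obtain ⟨-, hB⟩ := normPQ p z δ hp hpδ (k+1)
    rw [PQ_norm_succ] at hB
    have hprod : ‖qF p z (k+3)‖ * ‖qF p z (k+2)‖ < ‖qF p z (k+2)‖ * ‖qF p z (k+1)‖ := by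
      nlinarith [mul_le_mul_of_nonneg_right (le_of_lt hrδ) (norm_nonneg (qF p z (k+3)))]
    have hbpos : 0 < ‖qF p z (k+2)‖ := by
      rcases eq_or_lt_of_le (norm_nonneg (qF p z (k+2))) with h | h
      · exfalso
        nlinarith [mul_le_mul_of_nonneg_right (le_of_lt hrδ) (norm_nonneg (qF p z (k+3))),
          norm_nonneg (qF p z (k+1)), h.symm]
      · exact h
    have hc : ‖qF p z (k+3)‖ < ‖qF p z (k+1)‖ := by
      have h1 : ‖qF p z (k+2)‖ * ‖qF p z (k+3)‖ < ‖qF p z (k+2)‖ * ‖qF p z (k+1)‖ := by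
        rw [mul_comm] at hprod; linarith [hprod]
      exact lt_of_mul_lt_mul_left h1 hbpos.le
    have hih := ih k (by omega) (by linarith)
    have hcd : ‖qF p z (k+1)‖ * ‖qF p z k‖ < 1 := by
      linarith [mul_lt_mul_of_pos_left (show ‖qF p z (k+2)‖ < 1 by linarith) hr'0,
        mul_one (rr p (k+2))]
    linarith [mul_lt_mul_of_pos_left hc hδ]

lemma claimN (p : ℕ → ℝ) (z : ℂ) (δ : ℝ) (hδ : 0 < δ)
    (hp : ∀ i, 1 ≤ i → 0 < p i ∧ p i ≤ 1) (hpδ : ∀ i, 1 ≤ i → δ < p i)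
    (n : ℕ) (h : (2/δ + 2)/δ ≤ ‖qF p z (n+1)‖) : 1 ≤ ‖qF p z n‖ := by
  have hδ1 : δ < 1 := lt_of_lt_of_le (hpδ 1 le_rfl) (hp 1 le_rfl).2
  have h2δ : 2 ≤ 2/δ := by rw [le_div_iff₀ hδ]; linarith
  have hkey : δ * ((2/δ + 2)/δ) = 2/δ + 2 := mul_div_cancel₀ _ (ne_of_gt hδ)
  by_contra hcon
  push_neg at hcon
  have ha0 : 0 < ‖qF p z (n+1)‖ := by
    have : 0 < (2/δ + 2)/δ := by positivity
    linarith
  have hδa : 2/δ + 2 ≤ δ * ‖qF p z (n+1)‖ := by nlinarith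
  match n, h, hcon, ha0, hδa with
  | 0, h, hcon, ha0, hδa =>
    obtain ⟨hA, -⟩ := normPQ p z δ hp hpδ 0
    rw [PQ_norm_zero] at hA
    obtain ⟨hr1δ, hr10, hr11⟩ := rr_facts p δ hp hpδ 1
    nlinarith [norm_nonneg (qF p z 0),
      mul_le_mul_of_nonneg_right (le_of_lt hr1δ) (norm_nonneg (qF p z 1))]
  | 1, h, hcon, ha0, hδa =>
    obtain ⟨hA, -⟩ := normPQ p z δ hp hpδ 1
    rw [PQ_norm_succ] at hA
    obtain ⟨hr2δ, hr20, hr21⟩ := rr_facts p δ hp hpδ 2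
    obtain ⟨hr1δ, hr10, hr11⟩ := rr_facts p δ hp hpδ 1
    obtain ⟨-, hB0⟩ := normPQ p z δ hp hpδ 0
    rw [PQ_norm_zero] at hB0
    -- a1*a0 > δ*a2 - 1 ≥ 2/δ+1 ≥ 3 ;  a1*a0 ≤ a0 since a1 < 1
    have h1 : 2/δ + 1 ≤ ‖qF p z 1‖ * ‖qF p z 0‖ := by
      nlinarith [mul_le_mul_of_nonneg_right (le_of_lt hr2δ) (norm_nonneg (qF p z 2))]
    have h2 : ‖qF p z 1‖ * ‖qF p z 0‖ ≤ ‖qF p z 0‖ := by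
      nlinarith [norm_nonneg (qF p z 0)]
    -- a0 ≥ 3, but a0² ≤ r1*a1 + (1-r1) < 1
    nlinarith [mul_lt_mul_of_pos_left hcon hr10]
  | (k+2), h, hcon, ha0, hδa =>
    obtain ⟨hA, -⟩ := normPQ p z δ hp hpδ (k+2)
    rw [PQ_norm_succ] at hA
    obtain ⟨hrδ, hr0, hr1⟩ := rr_facts p δ hp hpδ (k+3)
    obtain ⟨hr'δ, hr'0, hr'1⟩ := rr_facts p δ hp hpδ (k+2)
    obtain ⟨-, hB⟩ := normPQ p z δ hp hpδ (k+1)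
    rw [PQ_norm_succ] at hB
    -- b*c > δ*a - 1 ≥ 2/δ+1, and b*c ≤ c since b < 1, so c ≥ 2/δ+1
    have h1 : 2/δ + 1 ≤ ‖qF p z (k+2)‖ * ‖qF p z (k+1)‖ := by
      nlinarith [mul_le_mul_of_nonneg_right (le_of_lt hrδ) (norm_nonneg (qF p z (k+3)))]
    have h2 : ‖qF p z (k+2)‖ * ‖qF p z (k+1)‖ ≤ ‖qF p z (k+1)‖ := by
      nlinarith [norm_nonneg (qF p z (k+1))]
    have hSc : 2/δ + 1 ≤ ‖qF p z (k+1)‖ := le_trans h1 h2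
    have hih := claimM p z δ hδ hp hpδ k hSc
    have hcd : ‖qF p z (k+1)‖ * ‖qF p z k‖ < 1 := by
      linarith [mul_lt_mul_of_pos_left hcon hr'0, mul_one (rr p (k+2))]
    -- δ*c ≥ δ*(2/δ+1) = 2+δ so δ*c - 1 ≥ 1+δ > 1 > c*d ≥ δ*c - 1, contra
    have : δ * (2/δ + 1) ≤ δ * ‖qF p z (k+1)‖ := mul_le_mul_of_nonneg_left hSc hδ.le
    have he : δ * (2/δ + 1) = 2 + δ := by field_simp
    linarith

lemma nest (p : ℕ → ℝ) (z : ℂ) (δ : ℝ) (hδ : 0 < δ)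
    (hp : ∀ i, 1 ≤ i → 0 < p i ∧ p i ≤ 1) (hpδ : ∀ i, 1 ≤ i → δ < p i)
    (n : ℕ) (h : (2/δ + 2)/δ ≤ ‖qF p z n‖) : (2/δ + 2)/δ ≤ ‖qF p z (n+1)‖ := by
  have hδ1 : δ < 1 := lt_of_lt_of_le (hpδ 1 le_rfl) (hp 1 le_rfl).2
  have h2δ : 2 ≤ 2/δ := by rw [le_div_iff₀ hδ]; linarith
  have hRpos : 0 < (2/δ + 2)/δ := by positivity
  have hR4 : 4 ≤ (2/δ + 2)/δ := by
    rw [le_div_iff₀ hδ]; nlinarith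
  match n, h with
  | 0, h =>
    have h1 : 1 ≤ ‖PQ p z 0‖ := by
      rw [PQ_norm_zero]
      nlinarith [norm_nonneg (qF p z 0)]
    have := fwd p z δ hp hpδ 0 h1
    rw [PQ_norm_zero] at this
    nlinarith [norm_nonneg (qF p z 0)]
  | (n+1), h =>
    have hn : 1 ≤ ‖qF p z n‖ := claimN p z δ hδ hp hpδ n h
    have h1 : (2/δ + 2)/δ ≤ ‖PQ p z (n+1)‖ := by
      rw [PQ_norm_succ]
      nlinarith [norm_nonneg (qF p z (n+1))]
    have := fwd p z δ hp hpδ (n+1) (by linarith)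
    linarith

lemma allge (p : ℕ → ℝ) (z : ℂ) (δ : ℝ) (hδ : 0 < δ)
    (hp : ∀ i, 1 ≤ i → 0 < p i ∧ p i ≤ 1) (hpδ : ∀ i, 1 ≤ i → δ < p i)
    (N : ℕ) (h : (2/δ + 2)/δ ≤ ‖qF p z N‖) :
    ∀ k, (2/δ + 2)/δ ≤ ‖qF p z (N+k)‖ := by
  intro k
  induction k with
  | zero => simpa using h
  | succ k ihk => exact nest p z δ hδ hp hpδ (N+k) ihk

lemma grow (p : ℕ → ℝ) (z : ℂ) (δ : ℝ) (hδ : 0 < δ)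
    (hp : ∀ i, 1 ≤ i → 0 < p i ∧ p i ≤ 1) (hpδ : ∀ i, 1 ≤ i → δ < p i)
    (N : ℕ) (h : (2/δ + 2)/δ ≤ ‖qF p z N‖) :
    ∀ k, ((2/δ + 2)/δ)^(k+1) ≤ ‖qF p z (N+1+k)‖ := by
  have hδ1 : δ < 1 := lt_of_lt_of_le (hpδ 1 le_rfl) (hp 1 le_rfl).2
  have h2δ : 2 ≤ 2/δ := by rw [le_div_iff₀ hδ]; linarith
  have hR1 : 1 ≤ (2/δ + 2)/δ := by rw [le_div_iff₀ hδ]; nlinarith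
  intro k
  induction k with
  | zero => simpa using allge p z δ hδ hp hpδ N h 1
  | succ k ihk =>
    have h1 := allge p z δ hδ hp hpδ N h k
    have hpow1 : (1:ℝ) ≤ ((2/δ + 2)/δ)^(k+2) := one_le_pow₀ hR1
    have hprod : ((2/δ + 2)/δ)^(k+2) ≤ ‖qF p z (N+1+k)‖ * ‖qF p z (N+k)‖ := by
      have := mul_le_mul ihk h1 (by positivity) (norm_nonneg _)
      calc ((2/δ + 2)/δ)^(k+2) = ((2/δ + 2)/δ)^(k+1) * ((2/δ + 2)/δ) := by ring
        _ ≤ ‖qF p z (N+1+k)‖ * ‖qF p z (N+k)‖ := this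
    have e : N+1+k = N+k+1 := by omega
    rw [e] at hprod
    have hf := fwd p z δ hp hpδ (N+k+1) (by
      rw [PQ_norm_succ]; linarith)
    rw [PQ_norm_succ] at hf
    have e2 : N+1+(k+1) = N+k+1+1 := by omega
    rw [e2]
    calc ((2/δ + 2)/δ)^(k+1+1) ≤ ‖qF p z (N+k+1)‖ * ‖qF p z (N+k)‖ := hprod
      _ ≤ ‖qF p z (N+k+1+1)‖ := hf

/-- Suppose `p i > δ > 0` for all `i ≥ 1`.  Then there is `R > 1`
such that `E = ⋂ₙ q_{F_n}⁻¹(D(0,R))` (open disks) and the preimages are nested: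
`q_{F_{n+1}}⁻¹(D(0,R)) ⊆ q_{F_n}⁻¹(D(0,R))` for all `n ≥ 0`. -/
theorem stmt16 (p : ℕ → ℝ) (hp : ∀ i, 1 ≤ i → 0 < p i ∧ p i ≤ 1)
    (δ : ℝ) (hδ : 0 < δ) (hpδ : ∀ i, 1 ≤ i → δ < p i) :
    ∃ R : ℝ, 1 < R ∧
      Eset p = ⋂ n : ℕ, (fun z : ℂ => qF p z n) ⁻¹' Metric.ball 0 R ∧
      ∀ n : ℕ, (fun z : ℂ => qF p z (n+1)) ⁻¹' Metric.ball 0 R ⊆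
        (fun z : ℂ => qF p z n) ⁻¹' Metric.ball 0 R := by
  have hδ1 : δ < 1 := lt_of_lt_of_le (hpδ 1 le_rfl) (hp 1 le_rfl).2
  have h2δ : 2 ≤ 2/δ := by rw [le_div_iff₀ hδ]; linarith
  have hR1 : 1 < (2/δ + 2)/δ := by rw [lt_div_iff₀ hδ]; linarith
  refine ⟨(2/δ + 2)/δ, hR1, ?_, ?_⟩
  · ext z
    simp only [Eset, Set.mem_setOf_eq, Set.mem_iInter, Set.mem_preimage, Metric.mem_ball,
      dist_zero_right]
    constructor
    · rintro ⟨C, hC⟩ n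
      by_contra hn
      push_neg at hn
      obtain ⟨k, hk⟩ := pow_unbounded_of_one_lt C hR1
      have hg := grow p z δ hδ hp hpδ n hn k
      have hmono : ((2/δ + 2)/δ)^k ≤ ((2/δ + 2)/δ)^(k+1) :=
        pow_le_pow_right₀ hR1.le (by omega)
      linarith [hC (n+1+k)]
    · intro hz
      exact ⟨(2/δ + 2)/δ, fun n => (hz n).le⟩
  · intro n z hz
    simp only [Set.mem_preimage, Metric.mem_ball, dist_zero_right] at hz ⊢
    by_contra hcon
    push_neg at hcon
    exact absurd (nest p z δ hδ hp hpδ n hcon) (not_le.2 hz)
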